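/- arXiv:2409.05204 — 7 statements merged into one kernel-verified Lean document; each statement's English description precedes it below -/
import Mathlib

section
/- Let Ω ⊆ ℝ^N be open, φ : Ω → ℝ everywhere differentiable with |∇φ| = 1 in Ω, x₀ ∈ Ω and R > 0 with B̄(x₀, R) ⊆ Ω. Then for every r ∈ [0, R], the maximum of φ over the closed ball B̄(x₀, r) equals φ(x₀) + r. -/
open Metric Set Filter Topology InnerProductSpace

theorem eikonal_max_eq {N : ℕ} {Ω : Set (EuclideanSpace ℝ (Fin N))}
    (hΩ : IsOpen Ω) (φ : EuclideanSpace ℝ (Fin N) → ℝ)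
    (hdiff : ∀ x ∈ Ω, DifferentiableAt ℝ φ x)
    (heik : ∀ x ∈ Ω, ‖gradient φ x‖ = 1)
    (x₀ : EuclideanSpace ℝ (Fin N)) (hx₀ : x₀ ∈ Ω) (R : ℝ) (hR : 0 < R)
    (hball : closedBall x₀ R ⊆ Ω) :
    ∀ r ∈ Icc (0:ℝ) R, IsGreatest (φ '' closedBall x₀ r) (φ x₀ + r) := by
  have hcont : ContinuousOn φ (closedBall x₀ R) := fun x hx =>
    ((hdiff x (hball hx)).continuousAt).continuousWithinAt
  have hfd : ∀ x ∈ Ω, ‖fderiv ℝ φ x‖ ≤ (1:ℝ) := fun x hx => by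
    rw [← heik x hx, gradient]
    exact le_of_eq ((toDual ℝ _).symm.norm_map _).symm
  -- 1-Lipschitz estimate on the big ball
  have hlip : ∀ x ∈ closedBall x₀ R, ∀ y ∈ closedBall x₀ R, φ y ≤ φ x + ‖y - x‖ := by
    intro x hx y hy
    have h := Convex.norm_image_sub_le_of_norm_fderiv_le (fun z hz => hdiff z (hball hz))
      (fun z hz => hfd z (hball hz)) (convex_closedBall x₀ R) hx hy
    rw [one_mul, Real.norm_eq_abs] at h
    have := (le_abs_self (φ y - φ x)).trans h
    linarith
  -- upper bound
  have hupper : ∀ r ∈ Icc (0:ℝ) R, ∀ y ∈ closedBall x₀ r, φ y ≤ φ x₀ + r := by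
    intro r hr y hy
    have h1 : y ∈ closedBall x₀ R := closedBall_subset_closedBall hr.2 hy
    have h2 := hlip x₀ (mem_closedBall_self (hr.1.trans hr.2)) y h1
    have h3 : ‖y - x₀‖ ≤ r := by rwa [← dist_eq_norm, ← mem_closedBall]
    linarith
  set M : ℝ → ℝ := fun r => sSup (φ '' closedBall x₀ r) with hMdef
  have hbdd : ∀ r ∈ Icc (0:ℝ) R, BddAbove (φ '' closedBall x₀ r) := fun r hr =>
    ⟨φ x₀ + r, fun v ⟨y, hy, hvy⟩ => hvy ▸ hupper r hr y hy⟩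
  have hne : ∀ r, 0 ≤ r → (φ '' closedBall x₀ r).Nonempty := fun r hr =>
    ⟨φ x₀, mem_image_of_mem φ (mem_closedBall_self hr)⟩
  -- maximizers
  have hmax : ∀ r ∈ Icc (0:ℝ) R, ∃ x ∈ closedBall x₀ r,
      IsMaxOn φ (closedBall x₀ r) x := fun r hr =>
    (isCompact_closedBall x₀ r).exists_isMaxOn ⟨x₀, mem_closedBall_self hr.1⟩
      (hcont.mono (closedBall_subset_closedBall hr.2))
  have hMeq : ∀ r ∈ Icc (0:ℝ) R, ∀ x ∈ closedBall x₀ r, IsMaxOn φ (closedBall x₀ r) x →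
      M r = φ x := by
    intro r hr x hx hmx
    exact IsGreatest.csSup_eq ⟨mem_image_of_mem φ hx,
      fun v ⟨y, hy, hvy⟩ => hvy ▸ hmx hy⟩
  have hM0 : M 0 = φ x₀ := by
    simp only [hMdef, closedBall_zero, image_singleton, csSup_singleton]
  -- Lipschitz continuity of M on [0, R]
  have hMmono : ∀ r ∈ Icc (0:ℝ) R, ∀ s ∈ Icc (0:ℝ) R, r ≤ s → M r ≤ M s := by
    intro r hr s hs hrs
    exact csSup_le_csSup (hbdd s hs) (hne r hr.1)
      (image_mono (f := φ) (closedBall_subset_closedBall hrs))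
  have hMlip : ∀ r ∈ Icc (0:ℝ) R, ∀ s ∈ Icc (0:ℝ) R, r ≤ s → M s ≤ M r + (s - r) := by
    intro r hr s hs hrs
    obtain ⟨x, hx, hmx⟩ := hmax s hs
    rw [hMeq s hs x hx hmx]
    set d := ‖x - x₀‖ with hd
    have hdist : dist x x₀ = d := dist_eq_norm x x₀
    have hds : d ≤ s := by rw [← hdist]; exact mem_closedBall.mp hx
    by_cases hcase : d ≤ r
    · have hxr : x ∈ closedBall x₀ r := by rw [mem_closedBall, hdist]; exact hcase
      have := le_csSup (hbdd r hr) (mem_image_of_mem φ hxr)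
      linarith
    · push_neg at hcase
      have hd0 : 0 < d := lt_of_le_of_lt hr.1 hcase
      set y := x₀ + (r / d) • (x - x₀) with hy
      have hrdnn : 0 ≤ r / d := div_nonneg hr.1 hd0.le
      have hrd1 : r / d ≤ 1 := (div_le_one hd0).mpr hcase.le
      have hyx₀ : ‖y - x₀‖ = r := by
        rw [hy, add_sub_cancel_left, norm_smul, Real.norm_eq_abs, abs_of_nonneg hrdnn,
          ← hd, div_mul_cancel₀ _ hd0.ne']
      have hyr : y ∈ closedBall x₀ r := by rw [mem_closedBall, dist_eq_norm, hyx₀]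
      have hyR : y ∈ closedBall x₀ R := closedBall_subset_closedBall hr.2 hyr
      have hxy : ‖x - y‖ = d - r := by
        have : x - y = (1 - r / d) • (x - x₀) := by
          rw [hy]; module
        rw [this, norm_smul, Real.norm_eq_abs, abs_of_nonneg (by linarith), ← hd]
        field_simp
      have h1 : φ x ≤ φ y + (d - r) := by
        have := hlip y hyR x (closedBall_subset_closedBall hs.2 hx)
        rwa [hxy] at this
      have h2 : φ y ≤ M r := le_csSup (hbdd r hr) (mem_image_of_mem φ hyr)
      linarith
  have hMcont : ContinuousOn M (Icc 0 R) := by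
    apply LipschitzOnWith.continuousOn (K := 1) (s := Icc (0:ℝ) R)
    apply LipschitzOnWith.of_dist_le_mul
    intro r hr s hs
    rw [NNReal.coe_one, one_mul, Real.dist_eq, Real.dist_eq]
    rcases le_total r s with h | h
    · have h1 := hMmono r hr s hs h
      have h2 := hMlip r hr s hs h
      rw [abs_of_nonpos (by linarith), abs_of_nonpos (by linarith)]
      linarith
    · have h1 := hMmono s hs r hr h
      have h2 := hMlip s hs r hr h
      rw [abs_of_nonneg (by linarith), abs_of_nonneg (by linarith)]
      linarith
  -- lower bound via fencing theorem applied to -M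
  have key : ∀ r ∈ Icc (0:ℝ) R, φ x₀ + r ≤ M r := by
    have main : ∀ ⦃x : ℝ⦄, x ∈ Icc (0:ℝ) R → -M x ≤ -φ x₀ - x := by
      apply image_le_of_liminf_slope_right_le_deriv_boundary
        (f := fun t => -M t) (B := fun t => -φ x₀ - t) (B' := fun _ => (-1 : ℝ))
      · exact hMcont.neg
      · rw [hM0]; simp
      · exact (continuousOn_const.sub continuousOn_id)
      · intro x hx
        simpa [Pi.sub_def] using (hasDerivWithinAt_const x (Ici x) (-φ x₀)).sub
          (hasDerivWithinAt_id x (Ici x))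
      · -- the slope bound
        intro r hr c hc
        obtain ⟨x, hx, hmx⟩ := hmax r ⟨hr.1, hr.2.le⟩
        have hxΩ : x ∈ Ω := hball (closedBall_subset_closedBall hr.2.le hx)
        set g := gradient φ x with hg
        have hgn : ‖g‖ = 1 := heik x hxΩ
        have hgrad : HasGradientAt φ g x := (hdiff x hxΩ).hasGradientAt
        set ψ : ℝ → ℝ := fun h => φ (x + h • g) with hψ
        have hline : HasDerivAt (fun h : ℝ => x + h • g) g 0 := by
          simpa using ((hasDerivAt_id (0:ℝ)).smul_const g).const_add x
        have hψd : HasDerivAt ψ 1 0 := by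
          have hgrad' : HasFDerivAt φ (toDual ℝ _ g) (x + (0:ℝ) • g) := by
            simpa using hgrad.hasFDerivAt
          have hval : (toDual ℝ _ g) g = 1 := by
            rw [toDual_apply_apply, real_inner_self_eq_norm_sq, hgn, one_pow]
          have := hgrad'.comp_hasDerivAt 0 hline
          rw [hval] at this
          exact this
        have hslope : Tendsto (slope ψ 0) (𝓝[>] 0) (𝓝 1) :=
          (hasDerivAt_iff_tendsto_slope.mp hψd).mono_left
            (nhdsWithin_mono 0 (fun z hz => ne_of_gt hz))
        have hev1 : ∀ᶠ h in 𝓝[>] (0:ℝ), -c < slope ψ 0 h :=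
          hslope.eventually (eventually_gt_nhds (by linarith))
        have htr : Tendsto (fun z => z - r) (𝓝[>] r) (𝓝[>] (0:ℝ)) := by
          have h0 : Tendsto (fun z : ℝ => z - r) (𝓝 r) (𝓝 (0:ℝ)) := by
            simpa [Pi.sub_def] using (continuous_id.sub (continuous_const (y := r))).tendsto r
          apply tendsto_nhdsWithin_of_tendsto_nhds_of_eventually_within _
            (h0.mono_left nhdsWithin_le_nhds)
          filter_upwards [self_mem_nhdsWithin] with z hz
          simpa [sub_pos] using hz
        have hev2 : ∀ᶠ z in 𝓝[>] r, -c < slope ψ 0 (z - r) := htr.eventually hev1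
        have hev3 : ∀ᶠ z in 𝓝[>] r, z < R := by
          filter_upwards [Ioo_mem_nhdsGT_of_mem ⟨le_refl r, hr.2⟩] with z hz
          exact hz.2
        refine ((hev2.and (hev3.and self_mem_nhdsWithin)).mono ?_).frequently
        rintro z ⟨hz1, hz2, hz3⟩
        have hzr : r < z := hz3
        have hzR : z ≤ R := hz2.le
        -- x + (z - r) • g ∈ closedBall x₀ z
        have hmem : x + (z - r) • g ∈ closedBall x₀ z := by
          rw [mem_closedBall, dist_eq_norm]
          calc ‖x + (z - r) • g - x₀‖ ≤ ‖x - x₀‖ + ‖(z - r) • g‖ := by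
                have : x + (z - r) • g - x₀ = (x - x₀) + (z - r) • g := by abel
                rw [this]; exact norm_add_le _ _
            _ ≤ r + (z - r) := by
                gcongr
                · rw [← dist_eq_norm]; exact mem_closedBall.mp hx
                · rw [norm_smul, Real.norm_eq_abs, abs_of_nonneg (by linarith), hgn, mul_one]
            _ = z := by ring
        have hMz : ψ (z - r) ≤ M z :=
          le_csSup (hbdd z ⟨by linarith [hr.1], hzR⟩) (mem_image_of_mem φ hmem)
        have hMr : M r = ψ 0 := by
          rw [hMeq r ⟨hr.1, hr.2.le⟩ x hx hmx, hψ]; simp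
        have hMslope : slope ψ 0 (z - r) ≤ slope M r z := by
          rw [slope_def_field, slope_def_field, sub_zero, hMr]
          gcongr
          all_goals linarith
        have : slope (fun t => -M t) r z = -slope M r z := by
          rw [slope_def_field, slope_def_field]; ring
        rw [this]
        linarith
    intro r hr
    have := main hr
    linarith
  -- conclude
  intro r hr
  obtain ⟨x, hx, hmx⟩ := hmax r hr
  have h1 : φ x ≤ φ x₀ + r := hupper r hr x hx
  have h2 : φ x₀ + r ≤ φ x := by rw [← hMeq r hr x hx hmx]; exact key r hr
  have hxeq : φ x = φ x₀ + r := le_antisymm h1 h2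
  exact ⟨⟨x, hx, hxeq⟩, fun v ⟨y, hy, hvy⟩ => hvy ▸ hupper r hr y hy⟩
end

section
/- Let Ω ⊆ ℝ^N be open, φ : Ω → ℝ everywhere differentiable with |∇φ| = 1 in Ω, x₀ ∈ Ω and R > 0 with B̄(x₀, R) ⊆ Ω. Then for every r ∈ [0, R], the minimum of φ over B̄(x₀, r) equals φ(x₀) − r. -/
open Metric Set

open Filter in
open scoped Topology in
theorem eikonal_min_eq {N : ℕ} {Ω : Set (EuclideanSpace ℝ (Fin N))}
    (hΩ : IsOpen Ω) (φ : EuclideanSpace ℝ (Fin N) → ℝ)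
    (hdiff : ∀ x ∈ Ω, DifferentiableAt ℝ φ x)
    (heik : ∀ x ∈ Ω, ‖gradient φ x‖ = 1)
    (x₀ : EuclideanSpace ℝ (Fin N)) (hx₀ : x₀ ∈ Ω) (R : ℝ) (hR : 0 < R)
    (hball : closedBall x₀ R ⊆ Ω) :
    ∀ r ∈ Icc (0:ℝ) R, IsLeast (φ '' closedBall x₀ r) (φ x₀ - r) := by
  -- ‖fderiv‖ = 1 on Ω
  have hfderiv : ∀ x ∈ Ω, ‖fderiv ℝ φ x‖ = 1 := by
    intro x hx
    have := heik x hx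
    rwa [gradient, LinearIsometryEquiv.norm_map] at this
  -- φ is 1-Lipschitz on the closed ball of radius R
  have hlip : ∀ x ∈ closedBall x₀ R, ∀ y ∈ closedBall x₀ R, ‖φ y - φ x‖ ≤ ‖y - x‖ := by
    intro x hx y hy
    have := (convex_closedBall x₀ R).norm_image_sub_le_of_norm_fderiv_le
      (fun z hz => hdiff z (hball hz)) (C := 1)
      (fun z hz => le_of_eq (hfderiv z (hball hz))) hx hy
    simpa using this
  -- lower bound: on closedBall x₀ t, φ ≥ φ x₀ - t
  have hlow : ∀ t, t ≤ R → ∀ y ∈ closedBall x₀ t, φ x₀ - t ≤ φ y := by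
    intro t ht y hy
    have hyR : y ∈ closedBall x₀ R := closedBall_subset_closedBall ht hy
    have h1 : ‖φ y - φ x₀‖ ≤ ‖y - x₀‖ := hlip x₀ (mem_closedBall_self (by positivity)) y hyR
    have h2 : ‖y - x₀‖ ≤ t := by
      rw [← dist_eq_norm]; exact mem_closedBall.1 hy
    have := (abs_le.1 (by simpa [Real.norm_eq_abs] using h1.trans h2)).1
    linarith
  -- continuity of φ on the ball
  have hcont : ContinuousOn φ (closedBall x₀ R) := fun x hx =>
    ((hdiff x (hball hx)).continuousAt).continuousWithinAt
  -- the min function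
  set m : ℝ → ℝ := fun t => sInf (φ '' closedBall x₀ t) with hm_def
  have hbdd : ∀ t, t ≤ R → BddBelow (φ '' closedBall x₀ t) := by
    intro t ht
    exact ⟨φ x₀ - t, by rintro _ ⟨y, hy, rfl⟩; exact hlow t ht y hy⟩
  -- existence of minimizers and characterization of m
  have hmin : ∀ t ∈ Icc (0:ℝ) R, ∃ x ∈ closedBall x₀ t,
      IsMinOn φ (closedBall x₀ t) x ∧ m t = φ x := by
    intro t ht
    obtain ⟨x, hx, hxmin⟩ := (isCompact_closedBall x₀ t).exists_isMinOn
      (nonempty_closedBall.2 ht.1) (hcont.mono (closedBall_subset_closedBall ht.2))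
    refine ⟨x, hx, hxmin, ?_⟩
    refine (IsLeast.csInf_eq ⟨⟨x, hx, rfl⟩, ?_⟩)
    rintro _ ⟨y, hy, rfl⟩
    exact hxmin hy
  -- m is 1-Lipschitz on [0, R]
  have hmlip : ∀ s t, 0 ≤ s → s ≤ t → t ≤ R → m t ≤ m s ∧ m s ≤ m t + (t - s) := by
    intro s t hs hst htR
    obtain ⟨y, hy, hymin, hyeq⟩ := hmin t ⟨hs.trans hst, htR⟩
    constructor
    · exact csInf_le_csInf (hbdd t htR)
        ((nonempty_closedBall.2 hs).image φ)
        (image_mono (f := φ) (closedBall_subset_closedBall hst))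
    · rcases eq_or_lt_of_le (hs.trans hst) with h0 | h0
      · have : s = t := le_antisymm hst (by linarith [hs, hst, h0.symm ▸ hst])
        subst this; linarith
      · -- t > 0; project the minimizer
        set y' := x₀ + (s / t) • (y - x₀) with hy'def
        have hnorm_y : ‖y - x₀‖ ≤ t := by rw [← dist_eq_norm]; exact mem_closedBall.1 hy
        have hst' : 0 ≤ s / t := div_nonneg hs h0.le
        have hle1 : s / t ≤ 1 := (div_le_one h0).2 hst
        have hy's : y' ∈ closedBall x₀ s := by
          rw [mem_closedBall, dist_eq_norm]
          have : y' - x₀ = (s / t) • (y - x₀) := by simp [hy'def]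
          rw [this, norm_smul, Real.norm_eq_abs, abs_of_nonneg hst']
          calc s / t * ‖y - x₀‖ ≤ s / t * t := by
                exact mul_le_mul_of_nonneg_left hnorm_y hst'
            _ = s := div_mul_cancel₀ s (ne_of_gt h0)
        have hy'R : y' ∈ closedBall x₀ R :=
          closedBall_subset_closedBall (hst.trans htR) hy's
        have hyR : y ∈ closedBall x₀ R := closedBall_subset_closedBall htR hy
        have hdist : ‖y' - y‖ ≤ t - s := by
          have heq : y' - y = (s / t - 1) • (y - x₀) := by
            rw [hy'def]
            rw [sub_smul, one_smul]
            abel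
          rw [heq, norm_smul, Real.norm_eq_abs, abs_of_nonpos (by linarith)]
          calc -(s / t - 1) * ‖y - x₀‖ ≤ -(s / t - 1) * t :=
                mul_le_mul_of_nonneg_left hnorm_y (by linarith)
            _ = t - s := by
                rw [neg_sub, sub_mul, one_mul, div_mul_cancel₀ s (ne_of_gt h0)]
        have h1 : φ y' - φ y ≤ t - s := by
          have hb := hlip y hyR y' hy'R
          have habs := abs_le.1 (by simpa [Real.norm_eq_abs] using hb.trans hdist)
          linarith [habs.2]
        have h2 : m s ≤ φ y' := csInf_le (hbdd s (hst.trans htR)) ⟨y', hy's, rfl⟩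
        rw [hyeq]
        linarith
  have hmcont : ContinuousOn m (Icc (0:ℝ) R) := by
    have : LipschitzOnWith 1 m (Icc (0:ℝ) R) := by
      rw [lipschitzOnWith_iff_dist_le_mul]
      intro s hs t ht
      rw [Real.dist_eq, Real.dist_eq, NNReal.coe_one, one_mul, abs_sub_le_iff]
      rcases le_total t s with h | h
      · obtain ⟨h1, h2⟩ := hmlip t s ht.1 h hs.2
        rw [abs_of_nonneg (by linarith : (0:ℝ) ≤ s - t)]
        constructor <;> linarith
      · obtain ⟨h1, h2⟩ := hmlip s t hs.1 h ht.2
        rw [abs_of_nonpos (by linarith : s - t ≤ 0)]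
        constructor <;> linarith
    exact this.continuousOn
  -- m 0 = φ x₀
  have hm0 : m 0 = φ x₀ := by
    rw [hm_def]
    simp [closedBall_zero]
  -- key differential inequality: m t ≤ φ x₀ - t on [0, R]
  have key : ∀ t ∈ Icc (0:ℝ) R, m t ≤ φ x₀ - t := by
    refine image_le_of_liminf_slope_right_le_deriv_boundary (B := fun t => φ x₀ - t)
      (B' := fun _ => (-1 : ℝ)) hmcont (by rw [hm0]; simp) ?_ ?_ ?_
    · exact (continuous_const.sub continuous_id).continuousOn
    · intro x _
      simpa using ((hasDerivWithinAt_id x (Ici x)).const_sub (φ x₀))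
    · intro s hs r hr
      -- s ∈ Ico 0 R; take a minimizer x of the ball of radius s
      obtain ⟨x, hx, hxmin, hxeq⟩ := hmin s ⟨hs.1, hs.2.le⟩
      have hxR : x ∈ closedBall x₀ R := closedBall_subset_closedBall hs.2.le hx
      have hxΩ : x ∈ Ω := hball hxR
      set u := gradient φ x with hu_def
      have hu1 : ‖u‖ = 1 := heik x hxΩ
      -- the directional function g t = φ (x - t • u) has derivative -1 at 0
      have hc : HasDerivAt (fun t : ℝ => x - t • u) (-u) 0 := by
        simpa using ((hasDerivAt_id (0:ℝ)).smul_const u).const_sub x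
      have hφ' : HasFDerivAt φ (fderiv ℝ φ x) (x - (0:ℝ) • u) := by
        simpa using (hdiff x hxΩ).hasFDerivAt
      have hg0 : HasDerivAt (fun t : ℝ => φ (x - t • u)) (fderiv ℝ φ x (-u)) 0 :=
        hφ'.comp_hasDerivAt 0 hc
      have hval : fderiv ℝ φ x (-u) = -1 := by
        have h1 : (inner ℝ u (-u) : ℝ) = fderiv ℝ φ x (-u) := by
          rw [hu_def, gradient]
          exact InnerProductSpace.toDual_symm_apply
        rw [← h1, inner_neg_right, real_inner_self_eq_norm_sq, hu1]
        norm_num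
      rw [hval] at hg0
      set g : ℝ → ℝ := fun t : ℝ => φ (x - t • u) with hg_def
      have hslope : Tendsto (slope g 0) (𝓝[≠] 0) (𝓝 (-1)) :=
        hasDerivAt_iff_tendsto_slope.1 hg0
      have hev : ∀ᶠ t in 𝓝[>] (0:ℝ), slope g 0 t < r := by
        have h2 : ∀ᶠ t in 𝓝[≠] (0:ℝ), slope g 0 t < r :=
          hslope.eventually (eventually_lt_nhds hr)
        exact h2.filter_mono (nhdsWithin_mono 0 (fun y hy => ne_of_gt hy))
      have hmap : Tendsto (fun z : ℝ => z - s) (𝓝[>] s) (𝓝[>] (0:ℝ)) := by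
        apply tendsto_nhdsWithin_of_tendsto_nhds_of_eventually_within
        · have : Tendsto (fun z : ℝ => z - s) (𝓝 s) (𝓝 (s - s)) :=
            (continuous_id.sub continuous_const).tendsto s
          simpa using this.mono_left nhdsWithin_le_nhds
        · filter_upwards [self_mem_nhdsWithin] with z hz
          exact sub_pos.2 (show s < z from hz)
      have hevz : ∀ᶠ z in 𝓝[>] s, slope g 0 (z - s) < r := hmap.eventually hev
      have hevR : ∀ᶠ z in 𝓝[>] s, z < R := by
        filter_upwards [Ioo_mem_nhdsGT_of_mem ⟨le_refl s, hs.2⟩] with z hz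
        exact hz.2
      refine ((hevz.and hevR).and self_mem_nhdsWithin).frequently.mono ?_
      rintro z ⟨⟨hz1, hz2⟩, hz3⟩
      have hzs : s < z := hz3
      have hzpos : 0 < z - s := sub_pos.2 hzs
      -- m z ≤ g (z - s)
      have hmem : x - (z - s) • u ∈ closedBall x₀ z := by
        rw [mem_closedBall, dist_eq_norm]
        have hxd : ‖x - x₀‖ ≤ s := by rw [← dist_eq_norm]; exact mem_closedBall.1 hx
        calc ‖x - (z - s) • u - x₀‖ = ‖(x - x₀) + (-((z - s) • u))‖ := by
              congr 1
              abel
          _ ≤ ‖x - x₀‖ + ‖-((z - s) • u)‖ := norm_add_le _ _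
          _ = ‖x - x₀‖ + (z - s) * ‖u‖ := by
              rw [norm_neg, norm_smul, Real.norm_eq_abs, abs_of_pos hzpos]
          _ ≤ s + (z - s) * 1 := by rw [hu1]; linarith
          _ = z := by ring
      have hmz : m z ≤ g (z - s) := csInf_le (hbdd z hz2.le) ⟨_, hmem, rfl⟩
      have hg00 : g 0 = φ x := by simp [hg_def]
      have hms : m s = g 0 := by rw [hg00, hxeq]
      rw [slope_def_field] at hz1 ⊢
      rw [sub_zero] at hz1
      calc (m z - m s) / (z - s) ≤ (g (z - s) - g 0) / (z - s) := by
            gcongr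
            linarith [hmz, hms]
        _ < r := hz1
  -- conclude
  intro r hr
  constructor
  · obtain ⟨x, hx, hxmin, hxeq⟩ := hmin r hr
    have h1 : φ x₀ - r ≤ φ x := hlow r hr.2 x hx
    have h2 : φ x ≤ φ x₀ - r := hxeq ▸ key r hr
    exact ⟨x, hx, le_antisymm h2 h1⟩
  · rintro _ ⟨y, hy, rfl⟩
    exact hlow r hr.2 y hy
end

section
/- Let Ω ⊆ ℝ^N be open, φ : Ω → ℝ everywhere differentiable with |∇φ| = 1 in Ω, x₀ ∈ Ω and R > 0 with B̄(x₀, R) ⊆ Ω. If x⁺, x⁻ ∈ B̄(x₀, R) are points where φ attains its maximum and minimum on B̄(x₀, R) respectively, then |x⁺ − x⁻| = 2R; in particular x⁺ and x⁻ are antipodal points of the ball. -/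
open Metric Set Filter Topology InnerProductSpace

theorem eikonal_max_aux {N : ℕ} {Ω : Set (EuclideanSpace ℝ (Fin N))}
    (φ : EuclideanSpace ℝ (Fin N) → ℝ)
    (hdiff : ∀ x ∈ Ω, DifferentiableAt ℝ φ x)
    (heik : ∀ x ∈ Ω, ‖fderiv ℝ φ x‖ = 1)
    (x₀ : EuclideanSpace ℝ (Fin N)) (R : ℝ) (hR : 0 ≤ R)
    (hball : closedBall x₀ R ⊆ Ω)
    {xp : EuclideanSpace ℝ (Fin N)} (hxp : xp ∈ closedBall x₀ R)
    (hmax : IsMaxOn φ (closedBall x₀ R) xp) :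
    φ x₀ + R ≤ φ xp := by
  have hfd : ∀ x ∈ closedBall x₀ R, DifferentiableAt ℝ φ x := fun x hx => hdiff x (hball hx)
  have hcont : ContinuousOn φ (closedBall x₀ R) := fun x hx =>
    (hfd x hx).continuousAt.continuousWithinAt
  -- 1-Lipschitz on the closed ball
  have hlip : ∀ x ∈ closedBall x₀ R, ∀ y ∈ closedBall x₀ R, φ y - φ x ≤ ‖y - x‖ := by
    intro x hx y hy
    have := (convex_closedBall x₀ R).norm_image_sub_le_of_norm_fderiv_le hfd
      (fun z hz => (heik z (hball hz)).le) hx hy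
    calc φ y - φ x ≤ ‖φ y - φ x‖ := le_abs_self _
    _ ≤ 1 * ‖y - x‖ := this
    _ = ‖y - x‖ := one_mul _
  set m : ℝ → ℝ := fun t => sSup (φ '' closedBall x₀ t) with hm_def
  have hne : ∀ t, 0 ≤ t → (φ '' closedBall x₀ t).Nonempty :=
    fun t ht => ⟨φ x₀, mem_image_of_mem _ (mem_closedBall_self ht)⟩
  have hbdd : ∀ t, t ≤ R → BddAbove (φ '' closedBall x₀ t) := fun t ht =>
    (isCompact_closedBall x₀ t).bddAbove_image
      (hcont.mono (closedBall_subset_closedBall ht))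
  have hattain : ∀ t, 0 ≤ t → t ≤ R →
      ∃ y ∈ closedBall x₀ t, IsMaxOn φ (closedBall x₀ t) y ∧ m t = φ y := by
    intro t ht htR
    obtain ⟨y, hy, hymax⟩ := (isCompact_closedBall x₀ t).exists_isMaxOn
      ⟨x₀, mem_closedBall_self ht⟩ (hcont.mono (closedBall_subset_closedBall htR))
    refine ⟨y, hy, hymax, ?_⟩
    apply IsGreatest.csSup_eq
    exact ⟨mem_image_of_mem _ hy, by rintro _ ⟨z, hz, rfl⟩; exact hymax hz⟩
  have hmem_le : ∀ t, t ≤ R → ∀ z ∈ closedBall x₀ t, φ z ≤ m t := fun t ht z hz =>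
    le_csSup (hbdd t ht) (mem_image_of_mem _ hz)
  -- upper Lipschitz bound for m
  have hm_up : ∀ s t, 0 ≤ s → s ≤ t → t ≤ R → m t ≤ m s + (t - s) := by
    intro s t hs hst htR
    obtain ⟨y, hy, hymax, hmy⟩ := hattain t (hs.trans hst) htR
    rw [hmy]
    by_cases hcase : ‖y - x₀‖ ≤ s
    · have : φ y ≤ m s := hmem_le s (hst.trans htR) y (by
        rw [mem_closedBall, dist_eq_norm]; exact hcase)
      linarith
    · push_neg at hcase
      set d := ‖y - x₀‖ with hd
      have hd0 : 0 < d := lt_of_le_of_lt hs hcase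
      set y' : EuclideanSpace ℝ (Fin N) := x₀ + (s / d) • (y - x₀) with hy'
      have hdt : d ≤ t := by rw [hd, ← dist_eq_norm]; exact mem_closedBall.mp hy
      have hy's : y' ∈ closedBall x₀ s := by
        rw [mem_closedBall, dist_eq_norm, hy']
        have : x₀ + (s / d) • (y - x₀) - x₀ = (s / d) • (y - x₀) := by abel
        rw [this, norm_smul, Real.norm_eq_abs, abs_of_nonneg (div_nonneg hs hd0.le), ← hd]
        field_simp
        exact le_rfl
      have hyy' : ‖y - y'‖ = d - s := by
        have : y - y' = (1 - s / d) • (y - x₀) := by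
          rw [hy']; module
        rw [this, norm_smul, Real.norm_eq_abs, ← hd,
          abs_of_nonneg (by rw [sub_nonneg]; exact (div_le_one hd0).mpr hcase.le)]
        field_simp
      have h1 : φ y - φ y' ≤ ‖y - y'‖ := hlip y'
        ((closedBall_subset_closedBall (hst.trans htR)) hy's) y
        ((closedBall_subset_closedBall htR) hy)
      have h2 : φ y' ≤ m s := hmem_le s (hst.trans htR) y' hy's
      rw [hyy'] at h1
      linarith
  have hm_mono : ∀ s t, 0 ≤ s → s ≤ t → t ≤ R → m s ≤ m t := fun s t hs hst htR =>
    csSup_le_csSup (hbdd t htR) (hne s hs)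
      (image_mono (closedBall_subset_closedBall hst))
  have hm_cont : ContinuousOn m (Icc 0 R) := by
    apply LipschitzOnWith.continuousOn (K := 1)
    rw [lipschitzOnWith_iff_dist_le_mul]
    intro s hs t ht
    rw [Real.dist_eq, Real.dist_eq, NNReal.coe_one, one_mul]
    rcases le_total t s with h | h
    · rw [abs_of_nonneg (by linarith [hm_mono t s ht.1 h hs.2]), abs_of_nonneg (by linarith)]
      linarith [hm_up t s ht.1 h hs.2]
    · rw [abs_of_nonpos (by linarith [hm_mono s t hs.1 h ht.2]), abs_of_nonpos (by linarith)]
      linarith [hm_up s t hs.1 h ht.2]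
  -- the fencing argument
  have key : ∀ x ∈ Icc (0:ℝ) R, -(m x) ≤ -(m 0) - x := by
    apply image_le_of_liminf_slope_right_le_deriv_boundary (B' := fun _ => -1)
      (f := fun t => -(m t)) (B := fun t => -(m 0) - t)
    · exact hm_cont.neg
    · simp
    · exact (continuousOn_const.sub continuousOn_id)
    · intro x hx
      simpa using ((hasDerivWithinAt_id x (Ici x)).const_sub (-(m 0)))
    · intro x hx r hr
      obtain ⟨y, hy, hymax, hmy⟩ := hattain x hx.1 hx.2.le
      have hyΩ : y ∈ Ω := hball ((closedBall_subset_closedBall hx.2.le) hy)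
      set g : EuclideanSpace ℝ (Fin N) := (toDual ℝ _).symm (fderiv ℝ φ y) with hg
      have hgnorm : ‖g‖ = 1 := by rw [hg, (toDual ℝ _).symm.norm_map]; exact heik y hyΩ
      have hDg : (fderiv ℝ φ y) g = 1 := by
        conv_lhs => rw [← (toDual ℝ _).apply_symm_apply (fderiv ℝ φ y), ← hg]
        rw [toDual_apply_apply, real_inner_self_eq_norm_sq, hgnorm]; norm_num
      have hψ : HasDerivAt (fun h : ℝ => φ (y + h • g)) 1 0 := by
        have hc : HasDerivAt (fun h : ℝ => y + h • g) g 0 := by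
          simpa using (((hasDerivAt_id (0:ℝ)).smul_const g).const_add y)
        have hf : HasFDerivAt φ (fderiv ℝ φ y) (y + (0:ℝ) • g) := by
          simpa using (hdiff y hyΩ).hasFDerivAt
        have := hf.comp_hasDerivAt 0 hc
        rw [hDg] at this; exact this
      have hslope : Tendsto (slope (fun h : ℝ => φ (y + h • g)) 0) (𝓝[≠] 0) (𝓝 1) :=
        hasDerivAt_iff_tendsto_slope.mp hψ
      have hev1 : ∀ᶠ h in 𝓝[≠] (0:ℝ), -r < slope (fun h : ℝ => φ (y + h • g)) 0 h :=
        hslope.eventually (eventually_gt_nhds (by linarith))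
      have hzx : Tendsto (fun z : ℝ => z - x) (𝓝[>] x) (𝓝[≠] (0:ℝ)) := by
        apply tendsto_nhdsWithin_of_tendsto_nhds_of_eventually_within
        · have h0 : Tendsto (fun z : ℝ => z - x) (𝓝 x) (𝓝 (x - x)) :=
            (continuous_id.sub continuous_const).tendsto x
          rw [sub_self] at h0
          exact h0.mono_left nhdsWithin_le_nhds
        · filter_upwards [self_mem_nhdsWithin] with z hz
          exact sub_ne_zero.mpr (ne_of_gt hz)
      have hevR : ∀ᶠ z in 𝓝[>] x, z < R := (eventually_lt_nhds hx.2).filter_mono nhdsWithin_le_nhds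
      apply Filter.Eventually.frequently
      filter_upwards [hzx.eventually hev1, hevR, self_mem_nhdsWithin] with z h1 hzR hz
      have hzx0 : (0:ℝ) < z - x := sub_pos.mpr hz
      -- y + (z-x) • g ∈ closedBall x₀ z
      have hmem : y + (z - x) • g ∈ closedBall x₀ z := by
        rw [mem_closedBall, dist_eq_norm]
        have : y + (z - x) • g - x₀ = (y - x₀) + (z - x) • g := by abel
        rw [this]
        calc ‖(y - x₀) + (z - x) • g‖ ≤ ‖y - x₀‖ + ‖(z - x) • g‖ := norm_add_le _ _
        _ ≤ x + (z - x) := by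
            gcongr
            · rw [← dist_eq_norm]; exact mem_closedBall.mp hy
            · rw [norm_smul, Real.norm_eq_abs, abs_of_pos hzx0, hgnorm, mul_one]
        _ = z := by ring
      have hmz : φ (y + (z - x) • g) ≤ m z := hmem_le z hzR.le _ hmem
      rw [slope_def_field] at h1 ⊢
      have h1' : -r < (φ (y + (z - x) • g) - φ (y + (0:ℝ) • g)) / (z - x) := by
        simpa using h1
      simp only [zero_smul, add_zero] at h1'
      have hlt : -r < (m z - m x) / (z - x) := by
        calc -r < (φ (y + (z - x) • g) - φ y) / (z - x) := h1'
        _ = (φ (y + (z - x) • g) - m x) / (z - x) := by rw [hmy]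
        _ ≤ (m z - m x) / (z - x) := by
            apply (div_le_div_iff_of_pos_right hzx0).mpr; linarith
      rw [lt_div_iff₀ hzx0] at hlt
      rw [div_lt_iff₀ hzx0]
      linarith
  -- conclude
  have h0 : m 0 = φ x₀ := by
    rw [hm_def]; simp [closedBall_zero]
  have hkey := key R ⟨hR, le_refl R⟩
  have hmR : m R ≤ φ xp := csSup_le ((hne R hR).mono (le_refl _)) (by
    rintro _ ⟨z, hz, rfl⟩; exact hmax hz)
  linarith

theorem eikonal_extrema_antipodal {N : ℕ} {Ω : Set (EuclideanSpace ℝ (Fin N))}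
    (hΩ : IsOpen Ω) (φ : EuclideanSpace ℝ (Fin N) → ℝ)
    (hdiff : ∀ x ∈ Ω, DifferentiableAt ℝ φ x)
    (heik : ∀ x ∈ Ω, ‖gradient φ x‖ = 1)
    (x₀ : EuclideanSpace ℝ (Fin N)) (hx₀ : x₀ ∈ Ω) (R : ℝ) (hR : 0 < R)
    (hball : closedBall x₀ R ⊆ Ω)
    (xp xm : EuclideanSpace ℝ (Fin N))
    (hxp : xp ∈ closedBall x₀ R) (hxm : xm ∈ closedBall x₀ R)
    (hmax : IsMaxOn φ (closedBall x₀ R) xp)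
    (hmin : IsMinOn φ (closedBall x₀ R) xm) :
    ‖xp - xm‖ = 2 * R ∧ xp + xm = x₀ + x₀ := by
  have heik' : ∀ x ∈ Ω, ‖fderiv ℝ φ x‖ = 1 := by
    intro x hx
    rw [← heik x hx]
    exact ((toDual ℝ _).symm.norm_map (fderiv ℝ φ x)).symm
  have hp : φ x₀ + R ≤ φ xp :=
    eikonal_max_aux φ hdiff heik' x₀ R hR.le hball hxp hmax
  have hm : (fun y => -φ y) x₀ + R ≤ (fun y => -φ y) xm := by
    apply eikonal_max_aux (fun y => -φ y) (fun x hx => (hdiff x hx).neg) ?_ x₀ R hR.le hball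
      hxm hmin.neg
    intro x hx
    rw [fderiv_fun_neg, norm_neg]
    exact heik' x hx
  simp only at hm
  -- Lipschitz bound
  have hlip : φ xp - φ xm ≤ ‖xp - xm‖ := by
    have hfd : ∀ x ∈ closedBall x₀ R, DifferentiableAt ℝ φ x := fun x hx => hdiff x (hball hx)
    have := (convex_closedBall x₀ R).norm_image_sub_le_of_norm_fderiv_le hfd
      (fun z hz => (heik' z (hball hz)).le) hxm hxp
    calc φ xp - φ xm ≤ ‖φ xp - φ xm‖ := le_abs_self _
    _ ≤ 1 * ‖xp - xm‖ := this
    _ = ‖xp - xm‖ := one_mul _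
  have hnp : ‖xp - x₀‖ ≤ R := by rw [← dist_eq_norm]; exact mem_closedBall.mp hxp
  have hnm : ‖xm - x₀‖ ≤ R := by rw [← dist_eq_norm]; exact mem_closedBall.mp hxm
  have htri : ‖xp - xm‖ ≤ 2 * R := by
    calc ‖xp - xm‖ = ‖(xp - x₀) - (xm - x₀)‖ := by abel_nf
    _ ≤ ‖xp - x₀‖ + ‖xm - x₀‖ := norm_sub_le _ _
    _ ≤ 2 * R := by linarith
  have heq : ‖xp - xm‖ = 2 * R := le_antisymm htri (by linarith)
  refine ⟨heq, ?_⟩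
  have hpar := parallelogram_law_with_norm ℝ (xp - x₀) (xm - x₀)
  have hsub : (xp - x₀) - (xm - x₀) = xp - xm := by abel
  rw [hsub, heq] at hpar
  have hzero : ‖(xp - x₀) + (xm - x₀)‖ = 0 := by nlinarith [norm_nonneg ((xp - x₀) + (xm - x₀)), mul_self_le_mul_self (norm_nonneg (xp - x₀)) hnp, mul_self_le_mul_self (norm_nonneg (xm - x₀)) hnm]
  have := norm_eq_zero.mp hzero
  have : xp + xm - (x₀ + x₀) = 0 := by rw [← this]; abel
  linear_combination (norm := abel) this
end

section
/- Let Ω ⊆ ℝ^N be open, φ : Ω → ℝ everywhere differentiable with |∇φ| = 1 in Ω, x₀ ∈ Ω and R > 0 with B̄(x₀, R) ⊆ Ω. Then the maximum of φ over B̄(x₀, R) is attained at a unique point, namely x₀ + R∇φ(x₀), and the minimum is attained at the unique point x₀ − R∇φ(x₀). -/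
open Metric Set Filter Topology

private lemma grad_norm_eq_fderiv_norm {N : ℕ} (φ : EuclideanSpace ℝ (Fin N) → ℝ)
    (x : EuclideanSpace ℝ (Fin N)) :
    ‖gradient φ x‖ = ‖fderiv ℝ φ x‖ := by
  rw [gradient]
  exact (InnerProductSpace.toDual ℝ _).symm.norm_map _

private lemma line_hasDerivAt {N : ℕ} (φ : EuclideanSpace ℝ (Fin N) → ℝ)
    {x : EuclideanSpace ℝ (Fin N)} (h : DifferentiableAt ℝ φ x) (v : EuclideanSpace ℝ (Fin N)) :
    HasDerivAt (fun t : ℝ => φ (x + t • v)) (inner ℝ (gradient φ x) v : ℝ) 0 := by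
  have hc : HasDerivAt (fun t : ℝ => x + t • v) v 0 := by
    simpa using ((hasDerivAt_id (0 : ℝ)).smul_const v).const_add x
  have hF : HasFDerivAt φ (fderiv ℝ φ x) ((fun t : ℝ => x + t • v) 0) := by
    simpa using h.hasFDerivAt
  have h2 := hF.comp_hasDerivAt (0 : ℝ) hc
  have hval : fderiv ℝ φ x v = (inner ℝ (gradient φ x) v : ℝ) := by
    rw [gradient, ← InnerProductSpace.toDual_apply_apply,
      (InnerProductSpace.toDual ℝ _).apply_symm_apply]
  rw [hval] at h2
  exact h2

private lemma eikonal_max {N : ℕ} {Ω : Set (EuclideanSpace ℝ (Fin N))}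
    (φ : EuclideanSpace ℝ (Fin N) → ℝ)
    (hdiff : ∀ x ∈ Ω, DifferentiableAt ℝ φ x)
    (heik : ∀ x ∈ Ω, ‖gradient φ x‖ = 1)
    (x₀ : EuclideanSpace ℝ (Fin N)) (hx₀ : x₀ ∈ Ω) (R : ℝ) (hR : 0 < R)
    (hball : closedBall x₀ R ⊆ Ω) :
    IsMaxOn φ (closedBall x₀ R) (x₀ + R • gradient φ x₀) ∧
      ∀ y ∈ closedBall x₀ R, IsMaxOn φ (closedBall x₀ R) y →
        y = x₀ + R • gradient φ x₀ := by
  -- Lipschitz bound on the closed ball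
  have hlip : ∀ x ∈ closedBall x₀ R, ∀ y ∈ closedBall x₀ R, φ x ≤ φ y + ‖x - y‖ := by
    intro x hx y hy
    have h1 : ‖φ x - φ y‖ ≤ 1 * ‖x - y‖ :=
      (convex_closedBall x₀ R).norm_image_sub_le_of_norm_hasFDerivWithin_le
        (f' := fun z => fderiv ℝ φ z)
        (fun z hz => (hdiff z (hball hz)).hasFDerivAt.hasFDerivWithinAt)
        (fun z hz => by rw [← grad_norm_eq_fderiv_norm, heik z (hball hz)]) hy hx
    have h2 := (abs_le.mp (by simpa using h1)).2
    linarith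
  have hcont : ContinuousOn φ (closedBall x₀ R) := fun x hx =>
    (hdiff x (hball hx)).continuousAt.continuousWithinAt
  -- main growth claim
  have claim1 : ∀ ε : ℝ, 0 < ε → ε < 1 →
      ∃ x, ‖x - x₀‖ ≤ R ∧ φ x₀ + (1 - ε) * R ≤ φ x := by
    intro ε hε0 hε1
    set A : Set ℝ :=
      {t | t ∈ Icc 0 R ∧ ∃ x, ‖x - x₀‖ ≤ t ∧ φ x₀ + (1 - ε) * t ≤ φ x} with hA
    have h0A : (0 : ℝ) ∈ A := ⟨⟨le_refl 0, hR.le⟩, x₀, by simp⟩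
    have hbdd : BddAbove A := ⟨R, fun t ht => ht.1.2⟩
    have hAne : A.Nonempty := ⟨0, h0A⟩
    set T := sSup A with hT
    have hT0 : 0 ≤ T := le_csSup hbdd h0A
    have hTR : T ≤ R := csSup_le hAne fun t ht => ht.1.2
    -- T ∈ A by compactness
    have hTA : T ∈ A := by
      obtain ⟨u, huA, hulim⟩ := mem_closure_iff_seq_limit.mp (csSup_mem_closure hAne hbdd)
      choose xs hxs1 hxs2 using fun n => (huA n).2
      have hxsball : ∀ n, xs n ∈ closedBall x₀ R := fun n => by
        rw [mem_closedBall, dist_eq_norm]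
        exact (hxs1 n).trans (huA n).1.2
      obtain ⟨x, hxball, σ, hσ, hxlim⟩ :=
        (isCompact_closedBall x₀ R).tendsto_subseq hxsball
      refine ⟨⟨hT0, hTR⟩, x, ?_, ?_⟩
      · have l1 : Tendsto (fun n => ‖xs (σ n) - x₀‖) atTop (𝓝 ‖x - x₀‖) :=
          ((continuous_id.sub continuous_const).norm.continuousAt.tendsto.comp hxlim)
        have l2 : Tendsto (fun n => u (σ n)) atTop (𝓝 T) :=
          hulim.comp hσ.tendsto_atTop
        exact le_of_tendsto_of_tendsto' l1 l2 fun n => hxs1 (σ n)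
      · have l1 : Tendsto (fun n => φ (xs (σ n))) atTop (𝓝 (φ x)) :=
          ((hdiff x (hball hxball)).continuousAt.tendsto.comp hxlim)
        have l2 : Tendsto (fun n => φ x₀ + (1 - ε) * u (σ n)) atTop
            (𝓝 (φ x₀ + (1 - ε) * T)) :=
          (tendsto_const_nhds.add (tendsto_const_nhds.mul (hulim.comp hσ.tendsto_atTop)))
        exact le_of_tendsto_of_tendsto' l2 l1 fun n => hxs2 (σ n)
    -- T must equal R
    rcases eq_or_lt_of_le hTR with hTeq | hTlt
    · obtain ⟨_, w, hw1, hw2⟩ := hTA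
      exact ⟨w, by rwa [hTeq] at hw1, by rwa [hTeq] at hw2⟩
    · exfalso
      obtain ⟨_, w, hw1, hw2⟩ := hTA
      have hwball : w ∈ closedBall x₀ R := by
        rw [mem_closedBall, dist_eq_norm]; exact hw1.trans hTR
      have hwΩ : w ∈ Ω := hball hwball
      set v := gradient φ w with hv
      have hv1 : ‖v‖ = 1 := heik w hwΩ
      have hd : HasDerivAt (fun t : ℝ => φ (w + t • v)) 1 0 := by
        have := line_hasDerivAt φ (hdiff w hwΩ) v
        rwa [real_inner_self_eq_norm_sq, hv1, one_pow] at this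
      have hslope : Tendsto (slope (fun t : ℝ => φ (w + t • v)) 0) (𝓝[>] 0) (𝓝 1) :=
        (hasDerivAt_iff_tendsto_slope.mp hd).mono_left
          (nhdsWithin_mono 0 fun t ht => ne_of_gt ht)
      have hev1 : ∀ᶠ h in 𝓝[>] (0 : ℝ),
          1 - ε < slope (fun t : ℝ => φ (w + t • v)) 0 h :=
        hslope.eventually_const_lt (by linarith)
      have hev2 : Ioo (0 : ℝ) (R - T) ∈ 𝓝[>] (0 : ℝ) :=
        Ioo_mem_nhdsGT_of_mem ⟨le_refl 0, by linarith⟩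
      obtain ⟨h, hsl, hh0, hhRT⟩ := (hev1.and hev2).exists
      -- show T + h ∈ A, contradicting sSup
      have hφh : φ x₀ + (1 - ε) * (T + h) ≤ φ (w + h • v) := by
        have : slope (fun t : ℝ => φ (w + t • v)) 0 h
            = (φ (w + h • v) - φ w) / h := by
          simp [slope_def_field, div_eq_inv_mul]
        rw [this] at hsl
        have h1 : (1 - ε) * h < φ (w + h • v) - φ w := by
          have := (lt_div_iff₀ hh0).mp hsl
          linarith
        nlinarith
      have hmem : T + h ∈ A := by
        refine ⟨⟨by linarith, by linarith⟩, w + h • v, ?_, hφh⟩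
        have : ‖w + h • v - x₀‖ ≤ ‖w - x₀‖ + ‖h • v‖ := by
          have := norm_add_le (w - x₀) (h • v)
          have heq : w + h • v - x₀ = (w - x₀) + h • v := by abel
          rw [heq]; exact this
        rw [norm_smul, hv1] at this
        have habs : |h| = h := abs_of_pos hh0
        rw [Real.norm_eq_abs, habs] at this
        linarith
      have := le_csSup hbdd hmem
      linarith
  -- existence of a maximizer
  obtain ⟨m, hm, hmax⟩ := (isCompact_closedBall x₀ R).exists_isMaxOn
    ⟨x₀, mem_closedBall_self hR.le⟩ hcont
  have hx₀ball : x₀ ∈ closedBall x₀ R := mem_closedBall_self hR.le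
  -- value of the max
  have hmval : φ m = φ x₀ + R := by
    have hle : φ m ≤ φ x₀ + R := by
      have := hlip m hm x₀ hx₀ball
      have hnorm : ‖m - x₀‖ ≤ R := by
        rwa [mem_closedBall, dist_eq_norm] at hm
      linarith
    have hge : φ x₀ + R ≤ φ m := by
      by_contra hcon
      push_neg at hcon
      set δ := φ x₀ + R - φ m with hδ
      have hδ0 : 0 < δ := by linarith
      set ε := min (δ / (2 * R)) (1 / 2) with hε
      have hε0 : 0 < ε := lt_min (div_pos hδ0 (by linarith)) (by norm_num)
      have hε1 : ε < 1 := lt_of_le_of_lt (min_le_right _ _) (by norm_num)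
      obtain ⟨x, hx1, hx2⟩ := claim1 ε hε0 hε1
      have hxball : x ∈ closedBall x₀ R := by
        rwa [mem_closedBall, dist_eq_norm]
      have hxm : φ x ≤ φ m := hmax hxball
      have hεR : ε * R ≤ δ / 2 := by
        have := min_le_left (δ / (2 * R)) (1 / 2)
        calc ε * R ≤ (δ / (2 * R)) * R := by nlinarith
          _ = δ / 2 := by field_simp
      nlinarith
    linarith
  -- uniqueness
  have huniq : ∀ y ∈ closedBall x₀ R, IsMaxOn φ (closedBall x₀ R) y →
      y = x₀ + R • gradient φ x₀ := by
    intro y hy hymax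
    have hyval : φ y = φ x₀ + R := by
      have h1 : φ y ≤ φ m := hmax hy
      have h2 : φ m ≤ φ y := hymax hm
      linarith
    have hynorm : ‖y - x₀‖ = R := by
      have hle : ‖y - x₀‖ ≤ R := by rwa [mem_closedBall, dist_eq_norm] at hy
      have hge : R ≤ ‖y - x₀‖ := by
        have := hlip y hy x₀ hx₀ball
        linarith
      linarith
    set u := R⁻¹ • (y - x₀) with hu
    have hunorm : ‖u‖ = 1 := by
      rw [hu, norm_smul, Real.norm_eq_abs, abs_of_pos (inv_pos.mpr hR), hynorm]
      field_simp
    have hyu : y = x₀ + R • u := by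
      rw [hu, smul_inv_smul₀ (ne_of_gt hR)]
      abel
    -- φ is affine along the segment
    have hψeq : ∀ t ∈ Icc (0 : ℝ) R, φ (x₀ + t • u) = φ x₀ + t := by
      intro t ht
      have htu : ‖t • u‖ = t := by
        rw [norm_smul, hunorm, Real.norm_eq_abs, abs_of_nonneg ht.1, mul_one]
      have hpball : x₀ + t • u ∈ closedBall x₀ R := by
        rw [mem_closedBall, dist_eq_norm]
        have : x₀ + t • u - x₀ = t • u := by abel
        rw [this, htu]; exact ht.2
      have hub : φ (x₀ + t • u) ≤ φ x₀ + t := by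
        have := hlip (x₀ + t • u) hpball x₀ hx₀ball
        have heq : x₀ + t • u - x₀ = t • u := by abel
        rw [heq, htu] at this
        linarith
      have hlb : φ x₀ + t ≤ φ (x₀ + t • u) := by
        have hd := hlip y hy (x₀ + t • u) hpball
        have heq : y - (x₀ + t • u) = (R - t) • u := by
          rw [hyu, sub_smul]; abel
        have hnd : ‖y - (x₀ + t • u)‖ = R - t := by
          rw [heq, norm_smul, hunorm, Real.norm_eq_abs, abs_of_nonneg (by linarith [ht.2]),
            mul_one]
        rw [hnd, hyval] at hd
        linarith
      linarith
    -- derivative of the line function at 0 equals 1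
    have hd := line_hasDerivAt φ (hdiff x₀ hx₀) u
    have hslope : Tendsto (slope (fun t : ℝ => φ (x₀ + t • u)) 0) (𝓝[>] 0)
        (𝓝 (inner ℝ (gradient φ x₀) u : ℝ)) :=
      (hasDerivAt_iff_tendsto_slope.mp hd).mono_left
        (nhdsWithin_mono 0 fun t ht => ne_of_gt ht)
    have hslope1 : Tendsto (slope (fun t : ℝ => φ (x₀ + t • u)) 0) (𝓝[>] 0) (𝓝 1) := by
      have hev : ∀ᶠ t in 𝓝[>] (0 : ℝ),
          slope (fun t : ℝ => φ (x₀ + t • u)) 0 t = 1 := by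
        filter_upwards [Ioc_mem_nhdsGT_of_mem ⟨le_refl 0, hR⟩] with t ht
        have h1 := hψeq t ⟨ht.1.le, ht.2⟩
        have h0 : φ (x₀ + (0 : ℝ) • u) = φ x₀ := by simp
        rw [slope_def_field, h1, h0, sub_zero, add_sub_cancel_left]
        exact div_self (ne_of_gt ht.1)
      exact Tendsto.congr' (hev.mono fun t ht => ht.symm) tendsto_const_nhds
    have hinner : (inner ℝ (gradient φ x₀) u : ℝ) = 1 :=
      tendsto_nhds_unique hslope hslope1
    have hgrad : gradient φ x₀ = u := by
      have hn : ‖gradient φ x₀‖ = 1 := heik x₀ hx₀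
      have : (inner ℝ (gradient φ x₀) u : ℝ) = ‖gradient φ x₀‖ * ‖u‖ := by
        rw [hn, hunorm, hinner]; ring
      have h2 := inner_eq_norm_mul_iff_real.mp this
      rw [hn, hunorm, one_smul, one_smul] at h2
      exact h2
    rw [hyu, hgrad]
  -- existence at the stated point
  have hmeq : m = x₀ + R • gradient φ x₀ := huniq m hm hmax
  exact ⟨hmeq ▸ hmax, huniq⟩

private lemma grad_neg {N : ℕ} (φ : EuclideanSpace ℝ (Fin N) → ℝ)
    (x : EuclideanSpace ℝ (Fin N)) :
    gradient (fun y => -φ y) x = -gradient φ x := by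
  rw [gradient, gradient, fderiv_fun_neg, map_neg]

theorem eikonal_unique_extrema {N : ℕ} {Ω : Set (EuclideanSpace ℝ (Fin N))}
    (hΩ : IsOpen Ω) (φ : EuclideanSpace ℝ (Fin N) → ℝ)
    (hdiff : ∀ x ∈ Ω, DifferentiableAt ℝ φ x)
    (heik : ∀ x ∈ Ω, ‖gradient φ x‖ = 1)
    (x₀ : EuclideanSpace ℝ (Fin N)) (hx₀ : x₀ ∈ Ω) (R : ℝ) (hR : 0 < R)
    (hball : closedBall x₀ R ⊆ Ω) :
    (IsMaxOn φ (closedBall x₀ R) (x₀ + R • gradient φ x₀) ∧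
      ∀ y ∈ closedBall x₀ R, IsMaxOn φ (closedBall x₀ R) y →
        y = x₀ + R • gradient φ x₀) ∧
    (IsMinOn φ (closedBall x₀ R) (x₀ - R • gradient φ x₀) ∧
      ∀ y ∈ closedBall x₀ R, IsMinOn φ (closedBall x₀ R) y →
        y = x₀ - R • gradient φ x₀) := by
  have hmax := eikonal_max φ hdiff heik x₀ hx₀ R hR hball
  have hdiff' : ∀ x ∈ Ω, DifferentiableAt ℝ (fun y => -φ y) x := fun x hx =>
    (hdiff x hx).neg
  have heik' : ∀ x ∈ Ω, ‖gradient (fun y => -φ y) x‖ = 1 := fun x hx => by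
    rw [grad_neg, norm_neg]; exact heik x hx
  have hmin := eikonal_max (fun y => -φ y) hdiff' heik' x₀ hx₀ R hR hball
  rw [grad_neg] at hmin
  have hpt : x₀ + R • (-gradient φ x₀) = x₀ - R • gradient φ x₀ := by
    rw [smul_neg, sub_eq_add_neg]
  rw [hpt] at hmin
  refine ⟨hmax, ?_, ?_⟩
  · intro x hx
    have := hmin.1 hx
    simpa using this
  · intro y hy hymin
    refine hmin.2 y hy ?_
    intro x hx
    have := hymin hx
    simpa using this
end

section
/- (Caffarelli–Crandall characteristics lemma) Let Ω ⊆ ℝ^N be open and φ : Ω → ℝ everywhere differentiable with |∇φ| = 1 in Ω. Then for every x₀ ∈ Ω there exists R > 0 such that for all t ∈ [−R, R], the point X(t) = x₀ + t∇φ(x₀) lies in Ω, ∇φ(X(t)) = ∇φ(x₀), and φ(X(t)) = φ(x₀) + t. -/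
open Set Metric InnerProductSpace

variable {E : Type*} [NormedAddCommGroup E] [InnerProductSpace ℝ E] [FiniteDimensional ℝ E]

local notation "⟪" x ", " y "⟫" => @inner ℝ _ _ x y

private lemma inner_gradient_eq_fderiv (φ : E → ℝ) (x v : E) :
    ⟪gradient φ x, v⟫ = fderiv ℝ φ x v := by
  rw [gradient, ← InnerProductSpace.toDual_apply_apply,
    LinearIsometryEquiv.apply_symm_apply]

private lemma norm_fderiv_eq_norm_gradient (φ : E → ℝ) (x : E) :
    ‖fderiv ℝ φ x‖ = ‖gradient φ x‖ := by
  rw [gradient]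
  exact (LinearIsometryEquiv.norm_map (toDual ℝ E).symm (fderiv ℝ φ x)).symm

private lemma gradient_neg' (φ : E → ℝ) (x : E) (h : DifferentiableAt ℝ φ x) :
    gradient (fun y => -φ y) x = -gradient φ x := by
  have h1 : HasGradientAt φ (gradient φ x) x := h.hasGradientAt
  have h2 : HasFDerivAt (fun y => -φ y) (-(toDual ℝ E (gradient φ x))) x :=
    h1.hasFDerivAt.neg
  have h3 : HasGradientAt (fun y => -φ y) (-gradient φ x) x := by
    rw [hasGradientAt_iff_hasFDerivAt, map_neg]
    exact h2
  exact h3.gradient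

/-- Derivative of `φ` along a line. -/
private lemma hasDerivAt_line (φ : E → ℝ) (x u : E) (t : ℝ)
    (h : DifferentiableAt ℝ φ (x + t • u)) :
    HasDerivAt (fun s : ℝ => φ (x + s • u)) ⟪gradient φ (x + t • u), u⟫ t := by
  have hc : HasDerivAt (fun s : ℝ => x + s • u) u t := by
    simpa using ((hasDerivAt_id t).smul_const u).const_add x
  have := h.hasFDerivAt.comp_hasDerivAt t hc
  rw [inner_gradient_eq_fderiv]; exact this

/-- φ is 1-Lipschitz on the closed ball. -/
private lemma lip_on_ball (φ : E → ℝ) (x₀ : E) (R : ℝ)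
    (hdiff : ∀ x ∈ closedBall x₀ R, DifferentiableAt ℝ φ x)
    (heik : ∀ x ∈ closedBall x₀ R, ‖gradient φ x‖ = 1) :
    ∀ x ∈ closedBall x₀ R, ∀ y ∈ closedBall x₀ R, φ x - φ y ≤ ‖x - y‖ := by
  intro x hx y hy
  have := (convex_closedBall x₀ R).norm_image_sub_le_of_norm_fderiv_le hdiff
    (fun z hz => by rw [norm_fderiv_eq_norm_gradient, heik z hz]) hy hx
  rw [one_mul] at this
  calc φ x - φ y ≤ |φ x - φ y| := le_abs_self _
    _ ≤ ‖x - y‖ := this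


/-- Forward half of the characteristics lemma. -/
private lemma forward (φ : E → ℝ) (x₀ : E) (R : ℝ) (hR : 0 < R)
    (hdiff : ∀ x ∈ closedBall x₀ R, DifferentiableAt ℝ φ x)
    (heik : ∀ x ∈ closedBall x₀ R, ‖gradient φ x‖ = 1) :
    ∀ t ∈ Icc (0:ℝ) R, φ (x₀ + t • gradient φ x₀) = φ x₀ + t := by
  have hx₀ : x₀ ∈ closedBall x₀ R := mem_closedBall_self hR.le
  have hcont : ContinuousOn φ (closedBall x₀ R) :=
    fun x hx => (hdiff x hx).continuousAt.continuousWithinAt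
  have hlip := lip_on_ball φ x₀ R hdiff heik
  set g : ℝ → ℝ := fun s => sSup (φ '' closedBall x₀ s) with hgdef
  have hsub : ∀ s ∈ Icc (0:ℝ) R, closedBall x₀ s ⊆ closedBall x₀ R :=
    fun s hs => closedBall_subset_closedBall hs.2
  have hne : ∀ s ∈ Icc (0:ℝ) R, (φ '' closedBall x₀ s).Nonempty :=
    fun s hs => ⟨φ x₀, mem_image_of_mem φ (mem_closedBall_self hs.1)⟩
  have hbdd : ∀ s ∈ Icc (0:ℝ) R, BddAbove (φ '' closedBall x₀ s) := by
    intro s hs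
    exact ((isCompact_closedBall x₀ s).image_of_continuousOn (hcont.mono (hsub s hs))).bddAbove
  have hmax : ∀ s ∈ Icc (0:ℝ) R, ∃ y ∈ closedBall x₀ s,
      (∀ z ∈ closedBall x₀ s, φ z ≤ φ y) ∧ g s = φ y := by
    intro s hs
    obtain ⟨y, hy, hm⟩ := (isCompact_closedBall x₀ s).exists_isMaxOn
      ⟨x₀, mem_closedBall_self hs.1⟩ (hcont.mono (hsub s hs))
    refine ⟨y, hy, fun z hz => hm hz, ?_⟩
    exact IsGreatest.csSup_eq ⟨mem_image_of_mem φ hy,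
      fun a ha => by obtain ⟨z, hz, rfl⟩ := ha; exact hm hz⟩
  have hg0 : g 0 = φ x₀ := by
    simp [hgdef, closedBall_zero]
  have hub : ∀ s ∈ Icc (0:ℝ) R, g s ≤ φ x₀ + s := by
    intro s hs
    refine csSup_le (hne s hs) ?_
    rintro a ⟨z, hz, rfl⟩
    have h1 : φ z - φ x₀ ≤ ‖z - x₀‖ := hlip z (hsub s hs hz) x₀ hx₀
    have h2 : ‖z - x₀‖ ≤ s := by
      rw [← dist_eq_norm]; exact mem_closedBall.1 hz
    linarith
  have hmono : ∀ s' s, 0 ≤ s' → s' ≤ s → s ≤ R → g s' ≤ g s :=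
    fun s' s h0 h1 h2 => csSup_le_csSup (hbdd s ⟨h0.trans h1, h2⟩)
      (hne s' ⟨h0, h1.trans h2⟩) (image_mono (closedBall_subset_closedBall h1))
  have hlipg : ∀ s' s, 0 ≤ s' → s' ≤ s → s ≤ R → g s ≤ g s' + (s - s') := by
    intro s' s h0 h1 h2
    rcases eq_or_lt_of_le (h0.trans h1) with hs0 | hs0
    · have hss : s' = s := le_antisymm h1 (by linarith)
      subst hss; simp
    refine csSup_le (hne s ⟨h0.trans h1, h2⟩) ?_
    rintro a ⟨y, hy, rfl⟩
    set y' : E := x₀ + (s' / s) • (y - x₀) with hy'def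
    have hyx : ‖y - x₀‖ ≤ s := by rw [← dist_eq_norm]; exact mem_closedBall.1 hy
    have hfrac0 : (0:ℝ) ≤ s' / s := div_nonneg h0 hs0.le
    have hfrac1 : s' / s ≤ 1 := div_le_one_of_le₀ h1 hs0.le
    have hy' : y' ∈ closedBall x₀ s' := by
      rw [mem_closedBall, dist_eq_norm, hy'def]
      have h : x₀ + (s' / s) • (y - x₀) - x₀ = (s' / s) • (y - x₀) := by abel
      rw [h, norm_smul, Real.norm_eq_abs, abs_of_nonneg hfrac0]
      calc s' / s * ‖y - x₀‖ ≤ s' / s * s := mul_le_mul_of_nonneg_left hyx hfrac0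
        _ = s' := by field_simp
    have hdy : ‖y - y'‖ ≤ s - s' := by
      have h : y - y' = (1 - s' / s) • (y - x₀) := by
        rw [hy'def, sub_smul, one_smul]; abel
      rw [h, norm_smul, Real.norm_eq_abs, abs_of_nonneg (by linarith)]
      calc (1 - s' / s) * ‖y - x₀‖ ≤ (1 - s' / s) * s :=
            mul_le_mul_of_nonneg_left hyx (by linarith)
        _ = s - s' := by field_simp
    have h3 : φ y - φ y' ≤ ‖y - y'‖ :=
      hlip y (hsub s ⟨h0.trans h1, h2⟩ hy) y' (hsub s' ⟨h0, h1.trans h2⟩ hy')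
    have h4 : φ y' ≤ g s' := le_csSup (hbdd s' ⟨h0, h1.trans h2⟩) (mem_image_of_mem φ hy')
    linarith
  have hcontg : ContinuousOn g (Icc (0:ℝ) R) := by
    refine LipschitzOnWith.continuousOn (K := 1) (LipschitzOnWith.of_dist_le_mul ?_)
    intro s hs s' hs'
    rw [Real.dist_eq, Real.dist_eq, NNReal.coe_one, one_mul, abs_le]
    rcases le_total s' s with h | h
    · have habs : |s - s'| = s - s' := abs_of_nonneg (by linarith)
      have l1 := hmono s' s hs'.1 h hs.2
      have l2 := hlipg s' s hs'.1 h hs.2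
      constructor <;> [linarith; linarith]
    · have habs : |s - s'| = s' - s := by rw [abs_of_nonpos (by linarith : s - s' ≤ 0)]; ring
      have l1 := hmono s s' hs.1 h hs'.2
      have l2 := hlipg s s' hs.1 h hs'.2
      constructor <;> [linarith; linarith]
  have hlb : ∀ x ∈ Icc (0:ℝ) R, g 0 + x ≤ g x := by
    have key : ∀ x ∈ Icc (0:ℝ) R, (fun s => -g s) x ≤ (fun s => -g 0 - s) x := by
      refine image_le_of_liminf_slope_right_le_deriv_boundary (B' := fun _ => (-1:ℝ))
        hcontg.neg (by simp) (continuousOn_const.sub continuousOn_id) ?_ ?_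
      · intro x hx
        simpa using ((hasDerivWithinAt_id x (Ici x)).const_sub (-g 0))
      · intro x hx r hr
        obtain ⟨y, hy, hm, hgx⟩ := hmax x ⟨hx.1, hx.2.le⟩
        have hyR : y ∈ closedBall x₀ R := hsub x ⟨hx.1, hx.2.le⟩ hy
        set u : E := gradient φ y with hu
        have hun : ‖u‖ = 1 := heik y hyR
        have hq : HasDerivAt (fun h : ℝ => φ (y + h • u)) 1 0 := by
          have := hasDerivAt_line φ y u 0 (by simpa using hdiff y hyR)
          simp only [zero_smul, add_zero] at this
          have hiu : ⟪u, u⟫ = (1:ℝ) := by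
            rw [real_inner_self_eq_norm_sq, hun]; norm_num
          rwa [← hu, hiu] at this
        have hslope : Filter.Tendsto (fun z : ℝ => slope (fun h : ℝ => φ (y + h • u)) 0 (z - x))
            (nhdsWithin x (Ioi x)) (nhds 1) := by
          have h1 : Filter.Tendsto (fun z : ℝ => z - x) (nhdsWithin x (Ioi x))
              (nhdsWithin 0 (Ioi 0)) := by
            rw [tendsto_nhdsWithin_iff]
            constructor
            · have h : Filter.Tendsto (fun z : ℝ => z - x) (nhds x) (nhds (x - x)) :=
                Filter.Tendsto.sub_const Filter.tendsto_id x
              rw [sub_self] at h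
              exact h.mono_left nhdsWithin_le_nhds
            · filter_upwards [self_mem_nhdsWithin] with z hz
              exact sub_pos.2 (mem_Ioi.1 hz)
          have h2 : Filter.Tendsto (slope (fun h : ℝ => φ (y + h • u)) 0)
              (nhdsWithin 0 (Ioi 0)) (nhds 1) :=
            (hasDerivAt_iff_tendsto_slope.1 hq).mono_left
              (nhdsWithin_mono 0 (fun z hz => ne_of_gt hz))
          exact h2.comp h1
        have hev1 : ∀ᶠ z in nhdsWithin x (Ioi x),
            -r < slope (fun h : ℝ => φ (y + h • u)) 0 (z - x) :=
          hslope (Ioi_mem_nhds (by have hr' : (-1:ℝ) < r := hr; linarith : -r < 1))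
        have hev2 : ∀ᶠ z in nhdsWithin x (Ioi x), z ∈ Ioc x R :=
          Ioc_mem_nhdsGT_of_mem ⟨le_rfl, hx.2⟩
        refine ((hev1.and hev2).mono ?_).frequently
        rintro z ⟨h1, h2⟩
        have hz0 : 0 < z - x := sub_pos.2 h2.1
        have hmem : y + (z - x) • u ∈ closedBall x₀ z := by
          rw [mem_closedBall, dist_eq_norm]
          have heq : y + (z - x) • u - x₀ = (y - x₀) + (z - x) • u := by abel
          rw [heq]
          have h3 : ‖y - x₀‖ ≤ x := by rw [← dist_eq_norm]; exact mem_closedBall.1 hy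
          have h4 : ‖(z - x) • u‖ = z - x := by
            rw [norm_smul, Real.norm_eq_abs, abs_of_pos hz0, hun, mul_one]
          calc ‖(y - x₀) + (z - x) • u‖ ≤ ‖y - x₀‖ + ‖(z - x) • u‖ := norm_add_le _ _
            _ ≤ x + (z - x) := by linarith
            _ = z := by ring
        have hgz : φ (y + (z - x) • u) ≤ g z :=
          le_csSup (hbdd z ⟨hx.1.trans h2.1.le, h2.2⟩) (mem_image_of_mem φ hmem)
        have hsl : slope (fun s => -g s) x z < r := by
          have e1 : slope (fun h : ℝ => φ (y + h • u)) 0 (z - x)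
              = (φ (y + (z - x) • u) - φ y) / (z - x) := by
            rw [slope_def_field]; simp
          have e2 : slope (fun s => -g s) x z = -((g z - g x) / (z - x)) := by
            rw [slope_def_field]; ring
          rw [e2]
          rw [e1] at h1
          have h5 : (φ (y + (z - x) • u) - φ y) / (z - x) ≤ (g z - g x) / (z - x) := by
            gcongr
            linarith
          linarith
        exact hsl
    intro x hx
    have h := key x hx
    simp only at h
    linarith
  -- conclude: g t = φ x₀ + t, and the maximizer is x₀ + t • ∇φ(x₀)
  intro t ht
  rcases eq_or_lt_of_le ht.1 with h0 | h0
  · simp [← h0]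
  have hgt : g t = φ x₀ + t := le_antisymm (hub t ht) (by have := hlb t ht; linarith [hg0])
  obtain ⟨y, hy, hm, hgy⟩ := hmax t ht
  have hyR : y ∈ closedBall x₀ R := hsub t ht hy
  have hφy : φ y = φ x₀ + t := by rw [← hgy, hgt]
  have hyx1 : ‖y - x₀‖ ≤ t := by rw [← dist_eq_norm]; exact mem_closedBall.1 hy
  have hyx2 : t ≤ ‖y - x₀‖ := by
    have := hlip y hyR x₀ hx₀
    linarith [hφy]
  have hyx : ‖y - x₀‖ = t := le_antisymm hyx1 hyx2
  set u : E := t⁻¹ • (y - x₀) with hudef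
  have hun : ‖u‖ = 1 := by
    rw [hudef, norm_smul, Real.norm_eq_abs, abs_of_pos (inv_pos.2 h0), hyx]
    field_simp
  have hyu : y = x₀ + t • u := by
    rw [hudef, smul_smul, mul_inv_cancel₀ (ne_of_gt h0), one_smul]
    abel
  have haff : ∀ s ∈ Icc (0:ℝ) t, φ (x₀ + s • u) = φ x₀ + s := by
    intro s hs
    have hsu : ‖s • u‖ = s := by
      rw [norm_smul, Real.norm_eq_abs, abs_of_nonneg hs.1, hun, mul_one]
    have hpt : x₀ + s • u ∈ closedBall x₀ R := by
      rw [mem_closedBall, dist_eq_norm]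
      have : x₀ + s • u - x₀ = s • u := by abel
      rw [this, hsu]; linarith [ht.2, hs.2]
    have hupper : φ (x₀ + s • u) - φ x₀ ≤ s := by
      have := hlip (x₀ + s • u) hpt x₀ hx₀
      have he : x₀ + s • u - x₀ = s • u := by abel
      rw [he, hsu] at this; exact this
    have hlower : φ y - φ (x₀ + s • u) ≤ t - s := by
      have h := hlip y hyR (x₀ + s • u) hpt
      have he : y - (x₀ + s • u) = (t - s) • u := by
        rw [hyu, sub_smul]; abel
      rw [he, norm_smul, Real.norm_eq_abs, abs_of_nonneg (by linarith [hs.2]), hun,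
        mul_one] at h
      exact h
    have := hφy
    linarith
  have hderiv : HasDerivAt (fun s : ℝ => φ (x₀ + s • u)) ⟪gradient φ x₀, u⟫ 0 := by
    have := hasDerivAt_line φ x₀ u 0 (by simpa using hdiff x₀ hx₀)
    simpa using this
  have hone : ⟪gradient φ x₀, u⟫ = (1:ℝ) := by
    have h2 : Filter.Tendsto (slope (fun s : ℝ => φ (x₀ + s • u)) 0)
        (nhdsWithin 0 (Ioi 0)) (nhds ⟪gradient φ x₀, u⟫) :=
      (hasDerivAt_iff_tendsto_slope.1 hderiv).mono_left
        (nhdsWithin_mono 0 (fun z hz => ne_of_gt hz))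
    have h3 : Filter.Tendsto (slope (fun s : ℝ => φ (x₀ + s • u)) 0)
        (nhdsWithin 0 (Ioi 0)) (nhds 1) := by
      have hev : ∀ᶠ z in nhdsWithin (0:ℝ) (Ioi 0),
          slope (fun s : ℝ => φ (x₀ + s • u)) 0 z = 1 := by
        filter_upwards [Ioc_mem_nhdsGT_of_mem (⟨le_rfl, h0⟩ : (0:ℝ) ∈ Ico 0 t)] with z hz
        rw [slope_def_field]
        rw [haff z ⟨hz.1.le, hz.2⟩]
        simp only [zero_smul, add_zero]
        rw [show φ x₀ + z - φ x₀ = z by ring, sub_zero]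
        exact div_self (ne_of_gt hz.1)
      exact Filter.Tendsto.congr' (hev.mono fun z hz => hz.symm) tendsto_const_nhds
    exact tendsto_nhds_unique h2 h3
  have hgrad : gradient φ x₀ = u :=
    (inner_eq_one_iff_of_norm_eq_one (heik x₀ hx₀) hun).1 hone
  rw [hgrad, ← hyu, hφy]

private lemma line_eq (φ : E → ℝ) (x₀ : E) (R : ℝ) (hR : 0 < R)
    (hdiff : ∀ x ∈ closedBall x₀ R, DifferentiableAt ℝ φ x)
    (heik : ∀ x ∈ closedBall x₀ R, ‖gradient φ x‖ = 1) :
    ∀ t ∈ Icc (-R) R, φ (x₀ + t • gradient φ x₀) = φ x₀ + t := by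
  intro t ht
  rcases le_total 0 t with h | h
  · exact forward φ x₀ R hR hdiff heik t ⟨h, ht.2⟩
  · set ψ : E → ℝ := fun y => -φ y with hψ
    have hdψ : ∀ x ∈ closedBall x₀ R, DifferentiableAt ℝ ψ x :=
      fun x hx => (hdiff x hx).neg
    have hgψ : ∀ x ∈ closedBall x₀ R, gradient ψ x = -gradient φ x :=
      fun x hx => gradient_neg' φ x (hdiff x hx)
    have heψ : ∀ x ∈ closedBall x₀ R, ‖gradient ψ x‖ = 1 := fun x hx => by
      rw [hgψ x hx, norm_neg]; exact heik x hx
    have hfor := forward ψ x₀ R hR hdψ heψ (-t) ⟨by linarith, by linarith [ht.1]⟩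
    rw [hgψ x₀ (mem_closedBall_self hR.le)] at hfor
    have heq : x₀ + (-t) • (-gradient φ x₀) = x₀ + t • gradient φ x₀ := by
      rw [smul_neg, neg_smul, neg_neg]
    rw [heq] at hfor
    simp only [hψ] at hfor
    linarith [hfor]

private lemma grad_eq (φ : E → ℝ) (x₀ : E) (R : ℝ) (hR : 0 < R)
    (hdiff : ∀ x ∈ closedBall x₀ R, DifferentiableAt ℝ φ x)
    (heik : ∀ x ∈ closedBall x₀ R, ‖gradient φ x‖ = 1) :
    ∀ t ∈ Icc (-(R/2)) (R/2), gradient φ (x₀ + t • gradient φ x₀) = gradient φ x₀ := by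
  intro t ht
  set e := gradient φ x₀ with he
  have hx₀ : x₀ ∈ closedBall x₀ R := mem_closedBall_self hR.le
  have hen : ‖e‖ = 1 := heik x₀ hx₀
  have hmem : ∀ s : ℝ, |s| ≤ R → x₀ + s • e ∈ closedBall x₀ R := by
    intro s hs
    rw [mem_closedBall, dist_eq_norm, show x₀ + s • e - x₀ = s • e by abel, norm_smul,
      Real.norm_eq_abs, hen, mul_one]
    exact hs
  have habs : |t| ≤ R/2 := abs_le.2 ⟨ht.1, ht.2⟩
  set x₁ := x₀ + t • e with hx₁
  have hx₁mem : x₁ ∈ closedBall x₀ R := hmem t (by linarith)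
  have hline := line_eq φ x₀ R hR hdiff heik
  have haff : ∀ s ∈ Icc (-(R/2)) (R/2), φ (x₁ + s • e) = φ x₀ + t + s := by
    intro s hs
    have habs' : |s| ≤ R/2 := abs_le.2 ⟨hs.1, hs.2⟩
    obtain ⟨ha1, ha2⟩ := abs_le.1 habs
    obtain ⟨hb1, hb2⟩ := abs_le.1 habs'
    have heq : x₁ + s • e = x₀ + (t+s) • e := by rw [hx₁, add_smul]; abel
    rw [heq, hline (t+s) ⟨by linarith, by linarith⟩]
    ring
  have hderiv : HasDerivAt (fun s : ℝ => φ (x₁ + s • e)) ⟪gradient φ x₁, e⟫ 0 := by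
    have := hasDerivAt_line φ x₁ e 0 (by simpa using hdiff x₁ hx₁mem)
    simpa using this
  have hderiv2 : HasDerivAt (fun s : ℝ => φ x₀ + t + s) 1 0 := by
    simpa using (hasDerivAt_id (0:ℝ)).const_add (φ x₀ + t)
  have hev : (fun s : ℝ => φ (x₁ + s • e)) =ᶠ[nhds (0:ℝ)] (fun s => φ x₀ + t + s) := by
    have hmem0 : Icc (-(R/2)) (R/2) ∈ nhds (0:ℝ) := Icc_mem_nhds (by linarith) (by linarith)
    filter_upwards [hmem0] with s hs using haff s hs
  have hd3 : HasDerivAt (fun s : ℝ => φ (x₁ + s • e)) 1 0 :=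
    hderiv2.congr_of_eventuallyEq hev
  have hone : ⟪gradient φ x₁, e⟫ = (1:ℝ) := hderiv.unique hd3
  exact (inner_eq_one_iff_of_norm_eq_one (heik x₁ hx₁mem) hen).1 hone

theorem caffarelli_crandall_characteristics {N : ℕ} {Ω : Set (EuclideanSpace ℝ (Fin N))}
    (hΩ : IsOpen Ω) (φ : EuclideanSpace ℝ (Fin N) → ℝ)
    (hdiff : ∀ x ∈ Ω, DifferentiableAt ℝ φ x)
    (heik : ∀ x ∈ Ω, ‖gradient φ x‖ = 1) :
    ∀ x₀ ∈ Ω, ∃ R > (0:ℝ), ∀ t ∈ Icc (-R) R,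
      x₀ + t • gradient φ x₀ ∈ Ω ∧
      gradient φ (x₀ + t • gradient φ x₀) = gradient φ x₀ ∧
      φ (x₀ + t • gradient φ x₀) = φ x₀ + t := by
  intro x₀ hx₀
  obtain ⟨ε, hε, hball⟩ := Metric.isOpen_iff.1 hΩ x₀ hx₀
  set R : ℝ := ε/2 with hRdef
  have hRpos : (0:ℝ) < R := by positivity
  have hsub : closedBall x₀ R ⊆ Ω :=
    (closedBall_subset_ball (by rw [hRdef]; linarith)).trans hball
  have hdiff' : ∀ x ∈ closedBall x₀ R, DifferentiableAt ℝ φ x := fun x hx => hdiff x (hsub hx)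
  have heik' : ∀ x ∈ closedBall x₀ R, ‖gradient φ x‖ = 1 := fun x hx => heik x (hsub hx)
  refine ⟨R/2, by positivity, ?_⟩
  intro t ht
  have habs : |t| ≤ R/2 := abs_le.2 ⟨ht.1, ht.2⟩
  obtain ⟨ha1, ha2⟩ := abs_le.1 habs
  have hmem : x₀ + t • gradient φ x₀ ∈ closedBall x₀ R := by
    rw [mem_closedBall, dist_eq_norm, show x₀ + t • gradient φ x₀ - x₀ = t • gradient φ x₀ by abel,
      norm_smul, Real.norm_eq_abs, heik x₀ hx₀, mul_one]
    linarith
  refine ⟨hsub hmem, ?_, ?_⟩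
  · exact grad_eq φ x₀ R hRpos hdiff' heik' t ⟨by linarith, by linarith⟩
  · exact line_eq φ x₀ R hRpos hdiff' heik' t ⟨by linarith, by linarith⟩
end

section
/- Let d > 0 and 0 ≤ ℓ < d/10. Let w, y, z ∈ ℝ^N with |y − w|² = d² + ℓ², |y − z| = d, and |z − w| ≥ 2d. Then the angle α at y in the triangle wyz between the vectors y − w and z − y satisfies 1 − cos α ≤ ℓ²/(2d√(d² + ℓ²)) · 2, and in particular sin α ≤ C·ℓ/d for a universal constant C. -/
set_option maxHeartbeats 1000000


open InnerProductGeometry Real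

theorem triangle_angle_estimate :
    ∃ C : ℝ, 0 < C ∧ ∀ (N : ℕ) (d ℓ : ℝ), 0 < d → 0 ≤ ℓ → ℓ < d / 10 →
      ∀ w y z : EuclideanSpace ℝ (Fin N),
        ‖y - w‖ ^ 2 = d ^ 2 + ℓ ^ 2 → ‖y - z‖ = d → 2 * d ≤ ‖z - w‖ →
        (1 - Real.cos (InnerProductGeometry.angle (y - w) (z - y)) ≤
            ℓ ^ 2 / (2 * d * Real.sqrt (d ^ 2 + ℓ ^ 2)) * 2) ∧
        Real.sin (InnerProductGeometry.angle (y - w) (z - y)) ≤ C * ℓ / d := by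
  refine ⟨2, by norm_num, ?_⟩
  intro N d ℓ hd hℓ hℓd w y z hyw hyz hzw
  set u := y - w with hu
  set v := z - y with hv
  have hsum : u + v = z - w := by rw [hu, hv]; abel
  have hs0 : (0:ℝ) < d ^ 2 + ℓ ^ 2 := by positivity
  set s := Real.sqrt (d ^ 2 + ℓ ^ 2) with hs
  have hss : s ^ 2 = d ^ 2 + ℓ ^ 2 := Real.sq_sqrt hs0.le
  have hsnn : 0 ≤ s := Real.sqrt_nonneg _
  have hsd : d ≤ s := by nlinarith
  have hspos : 0 < s := lt_of_lt_of_le hd hsd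
  have hnu : ‖u‖ = s := by
    rw [hs, show d ^ 2 + ℓ ^ 2 = ‖u‖ ^ 2 from hyw.symm]
    exact (Real.sqrt_sq (norm_nonneg _)).symm
  have hnv : ‖v‖ = d := by rw [hv, norm_sub_rev]; exact hyz
  have hinner : d ^ 2 - ℓ ^ 2 / 2 ≤ (inner ℝ u v : ℝ) := by
    have h1 : ‖u + v‖ ^ 2 = ‖u‖ ^ 2 + 2 * (inner ℝ u v : ℝ) + ‖v‖ ^ 2 :=
      norm_add_sq_real u v
    have h2 : (2 * d) ^ 2 ≤ ‖u + v‖ ^ 2 := by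
      rw [hsum]; exact pow_le_pow_left₀ (by positivity) hzw 2
    nlinarith [hyw, hnv]
  have hcos : Real.cos (angle u v) = (inner ℝ u v : ℝ) / (s * d) := by
    rw [InnerProductGeometry.cos_angle, hnu, hnv]
  have hkey : d * s ≤ d ^ 2 + ℓ ^ 2 / 2 := by nlinarith [sq_nonneg (s - d)]
  have hsd0 : 0 < s * d := by positivity
  have hcoslb : 1 - Real.cos (angle u v) ≤ ℓ ^ 2 / (2 * d * s) * 2 := by
    rw [hcos]
    have e1 : (1 : ℝ) - (inner ℝ u v : ℝ) / (s * d) = (s * d - (inner ℝ u v : ℝ)) / (s * d) := by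
      field_simp
    have e2 : ℓ ^ 2 / (2 * d * s) * 2 = ℓ ^ 2 / (d * s) := by
      field_simp
    rw [e1, e2, div_le_div_iff₀ hsd0 (by positivity)]
    nlinarith
  constructor
  · exact hcoslb
  · have hsin0 : 0 ≤ Real.sin (angle u v) :=
      Real.sin_nonneg_of_nonneg_of_le_pi (angle_nonneg u v) (angle_le_pi u v)
    have hcos1 : Real.cos (angle u v) ≤ 1 := Real.cos_le_one _
    have hpyth : Real.sin (angle u v) ^ 2 + Real.cos (angle u v) ^ 2 = 1 :=
      Real.sin_sq_add_cos_sq _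
    have h3 : (1 - Real.cos (angle u v)) * (d * s) ≤ ℓ ^ 2 := by
      have e2 : ℓ ^ 2 / (2 * d * s) * 2 = ℓ ^ 2 / (d * s) := by
        field_simp
      rw [e2] at hcoslb
      calc (1 - Real.cos (angle u v)) * (d * s) ≤ ℓ ^ 2 / (d * s) * (d * s) :=
            mul_le_mul_of_nonneg_right hcoslb (by positivity)
        _ = ℓ ^ 2 := div_mul_cancel₀ _ (by positivity)
    have h4 : (1 - Real.cos (angle u v)) * d ^ 2 ≤ ℓ ^ 2 := by nlinarith
    have hsq : (Real.sin (angle u v) * d) ^ 2 ≤ (2 * ℓ) ^ 2 := by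
      nlinarith [sq_nonneg ((1 - Real.cos (angle u v)) * d), sq_nonneg ℓ, hpyth, h4]
    have h5 : Real.sin (angle u v) * d ≤ 2 * ℓ := by
      nlinarith [mul_nonneg hsin0 hd.le]
    rw [show (2:ℝ) * ℓ / d = 2 * ℓ / d from rfl, le_div_iff₀ hd]
    linarith
end

section
/- Let x_r be a point of a closed ball B̄(x₀, r) at which a differentiable 1-Lipschitz function φ with |∇φ(x_r)| = 1 attains its maximum over B̄(x₀, r), and let M(s) denote the max of φ over B̄(x₀, s) for s near r. Then the lower right derivative of M at r is at least 1: liminf_{h→0⁺} (M(r+h) − M(r))/h ≥ 1. -/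
open Metric Set Filter

theorem max_function_lower_right_derivative {N : ℕ} {Ω : Set (EuclideanSpace ℝ (Fin N))}
    (hΩ : IsOpen Ω) (φ : EuclideanSpace ℝ (Fin N) → ℝ)
    (hdiff : ∀ x ∈ Ω, DifferentiableAt ℝ φ x)
    (hlip : LipschitzOnWith 1 φ Ω)
    (x₀ : EuclideanSpace ℝ (Fin N)) (r h₀ : ℝ) (hr : 0 ≤ r) (hh₀ : 0 < h₀)
    (hball : closedBall x₀ (r + h₀) ⊆ Ω)
    (xr : EuclideanSpace ℝ (Fin N)) (hxr : xr ∈ closedBall x₀ r)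
    (hmax : IsMaxOn φ (closedBall x₀ r) xr)
    (hgrad : ‖gradient φ xr‖ = 1)
    (M : ℝ → ℝ) (hM : ∀ s, M s = sSup (φ '' closedBall x₀ s)) :
    1 ≤ Filter.liminf (fun h => (M (r + h) - M r) / h) (nhdsWithin 0 (Ioi 0)) := by
  set v := gradient φ xr with hv
  have hx0 : x₀ ∈ closedBall x₀ (r + h₀) := by
    simp [le_of_lt, add_pos_of_nonneg_of_pos hr hh₀]
  -- bounded above on balls of radius ≤ r + h₀
  have hbdd : ∀ s : ℝ, s ≤ r + h₀ → BddAbove (φ '' closedBall x₀ s) := by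
    intro s hs
    refine ⟨φ x₀ + (r + h₀), ?_⟩
    rintro y ⟨x, hx, rfl⟩
    have hxΩ : x ∈ closedBall x₀ (r + h₀) :=
      closedBall_subset_closedBall hs hx
    have h1 := hlip.dist_le_mul x (hball hxΩ) x₀ (hball hx0)
    rw [Real.dist_eq] at h1
    have hd : dist x x₀ ≤ r + h₀ := mem_closedBall.mp hxΩ
    simp only [NNReal.coe_one, one_mul] at h1
    have h2 : |φ x - φ x₀| ≤ r + h₀ := h1.trans hd
    linarith [(abs_le.mp h2).2]
  -- M r = φ xr
  have hMr : M r = φ xr := by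
    rw [hM r]
    apply le_antisymm
    · apply csSup_le ⟨φ xr, mem_image_of_mem _ hxr⟩
      rintro y ⟨x, hx, rfl⟩
      exact hmax hx
    · exact le_csSup (hbdd r (by linarith)) (mem_image_of_mem _ hxr)
  -- the slope along the gradient direction tends to 1
  have hdφ : DifferentiableAt ℝ φ xr :=
    hdiff xr (hball (closedBall_subset_closedBall (by linarith) hxr))
  have hgradAt := hdφ.hasGradientAt
  have hfd : HasFDerivAt φ (InnerProductSpace.toDual ℝ _ v) xr := hgradAt.hasFDerivAt
  have hcurve : HasDerivAt (fun h : ℝ => xr + h • v) v 0 := by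
    simpa using ((hasDerivAt_id (0:ℝ)).smul_const v).const_add xr
  have hcomp : HasDerivAt (fun h : ℝ => φ (xr + h • v)) 1 0 := by
    have hfd0 : HasFDerivAt φ (InnerProductSpace.toDual ℝ _ v) (xr + (0:ℝ) • v) := by
      simpa using hfd
    have := hfd0.comp_hasDerivAt 0 hcurve
    have hval : (InnerProductSpace.toDual ℝ _ v) v = 1 := by
      have : (InnerProductSpace.toDual ℝ _ v) v = inner ℝ v v := rfl
      rw [this, real_inner_self_eq_norm_sq, hgrad]; norm_num
    rw [hval] at this; exact this
  have hslope : Tendsto (fun h : ℝ => (φ (xr + h • v) - φ xr) / h)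
      (nhdsWithin 0 (Ioi 0)) (nhds 1) := by
    have := (hasDerivAt_iff_tendsto_slope.mp hcomp).mono_left
      (nhdsWithin_mono 0 (fun x hx => ne_of_gt hx : Ioi (0:ℝ) ⊆ {0}ᶜ))
    refine this.congr' ?_
    filter_upwards [self_mem_nhdsWithin] with h hh
    simp [slope_def_field, div_eq_inv_mul]
  -- eventual inequality
  have hineq : ∀ᶠ h in nhdsWithin (0:ℝ) (Ioi 0),
      (φ (xr + h • v) - φ xr) / h ≤ (M (r + h) - M r) / h := by
    filter_upwards [Icc_mem_nhdsGT_of_mem (by constructor <;> linarith : (0:ℝ) ∈ Ico 0 h₀),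
      self_mem_nhdsWithin] with h hh hpos
    have hh₀' : h ≤ h₀ := hh.2
    have hhpos : (0:ℝ) < h := hpos
    have hmem : xr + h • v ∈ closedBall x₀ (r + h) := by
      rw [mem_closedBall]
      calc dist (xr + h • v) x₀ ≤ dist (xr + h • v) xr + dist xr x₀ := dist_triangle _ _ _
        _ ≤ h + r := by
            have : dist (xr + h • v) xr = ‖h • v‖ := by
              rw [dist_eq_norm]; congr 1; exact add_sub_cancel_left xr (h • v)
            rw [this, norm_smul, hgrad]
            simp [abs_of_pos hhpos]
            exact mem_closedBall.mp hxr
        _ = r + h := by ring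
    have hMrh : φ (xr + h • v) ≤ M (r + h) := by
      rw [hM]
      exact le_csSup (hbdd (r + h) (by linarith)) (mem_image_of_mem _ hmem)
    rw [hMr]
    gcongr
  -- conclude
  have h1 : (1:ℝ) = liminf (fun h : ℝ => (φ (xr + h • v) - φ xr) / h)
      (nhdsWithin 0 (Ioi 0)) := (hslope.liminf_eq).symm
  rw [h1]
  -- upper bound: M (r+h) ≤ M r + h by 1-Lipschitzness
  have hub : ∀ᶠ h in nhdsWithin (0:ℝ) (Ioi 0), (M (r + h) - M r) / h ≤ 1 := by
    filter_upwards [Icc_mem_nhdsGT_of_mem (by constructor <;> linarith : (0:ℝ) ∈ Ico 0 h₀),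
      self_mem_nhdsWithin] with h hh hpos
    have hhpos : (0:ℝ) < h := hpos
    have hMle : M (r + h) ≤ M r + h := by
      rw [hM (r + h)]
      apply csSup_le ⟨φ x₀, mem_image_of_mem _ (mem_closedBall_self (by linarith))⟩
      rintro y ⟨x, hx, rfl⟩
      rw [mem_closedBall] at hx
      by_cases hcase : dist x x₀ ≤ r
      · have : φ x ≤ M r := by
          rw [hMr]; exact hmax (mem_closedBall.mpr hcase)
        linarith
      · push_neg at hcase
        have hdpos : 0 < dist x x₀ := lt_of_le_of_lt hr hcase
        set t : ℝ := r / dist x x₀ with ht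
        have ht0 : 0 ≤ t := div_nonneg hr hdpos.le
        have ht1 : t ≤ 1 := (div_le_one hdpos).mpr hcase.le
        set x' := x₀ + t • (x - x₀) with hx'
        have hdx' : dist x' x₀ = r := by
          rw [dist_eq_norm]
          have : x' - x₀ = t • (x - x₀) := by rw [hx']; abel
          rw [this, norm_smul, Real.norm_eq_abs, abs_of_nonneg ht0, ht,
            ← dist_eq_norm, div_mul_cancel₀ _ hdpos.ne']
        have hxx' : dist x x' = dist x x₀ - r := by
          rw [dist_eq_norm]
          have : x - x' = (1 - t) • (x - x₀) := by
            rw [hx']; module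
          rw [this, norm_smul, Real.norm_eq_abs, abs_of_nonneg (by linarith), ← dist_eq_norm,
            ht]
          field_simp
        have hx'mem : x' ∈ closedBall x₀ r := mem_closedBall.mpr hdx'.le
        have hxΩ : x ∈ Ω := hball (mem_closedBall.mpr (by linarith [hh.2]))
        have hx'Ω : x' ∈ Ω := hball (closedBall_subset_closedBall (by linarith) hx'mem)
        have hlipd := hlip.dist_le_mul x hxΩ x' hx'Ω
        rw [Real.dist_eq, NNReal.coe_one, one_mul] at hlipd
        have h1' := (abs_le.mp hlipd).2
        have h2' : φ x' ≤ M r := by rw [hMr]; exact hmax hx'mem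
        have h3' : dist x x₀ ≤ r + h := hx
        linarith [hxx' ▸ h1']
    rw [div_le_one hhpos]
    linarith
  exact liminf_le_liminf hineq hslope.isBoundedUnder_ge
    (isCoboundedUnder_ge_of_eventually_le _ hub)
end
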